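/- Let Δ ∈ F_q^(d × d') have rank strictly greater than r, and let f_1,...,f_r, g_1,...,g_r be any univariate polynomials over F_q of degrees less than d and d' respectively. Then for (x,y) uniform in F_q², the probability that P_Δ(x,y) = Σ_{k=1}^r f_k(x)·g_k(y) is at most (d + d' - 2)/q. -/
import Mathlib

open Polynomial


lemma count_aux (F : Type*) [Field F] [Fintype F] [DecidableEq F]
    (Q : Polynomial (Polynomial F)) (hQ : Q ≠ 0) :
    (Finset.univ.filter (fun p : F × F =>
        Polynomial.eval₂ (Polynomial.evalRingHom p.1) p.2 Q = 0)).card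
      ≤ (Q.leadingCoeff.natDegree + Q.natDegree) * Fintype.card F := by
  classical
  set c := Q.leadingCoeff with hc_def
  have hc : c ≠ 0 := leadingCoeff_ne_zero.mpr hQ
  have key : ∀ x : F, c.eval x ≠ 0 →
      (Finset.univ.filter (fun y : F => Polynomial.eval₂ (evalRingHom x) y Q = 0)).card
        ≤ Q.natDegree := by
    intro x hx
    set Qx := Q.map (evalRingHom x) with hQx_def
    have hQx : Qx ≠ 0 := by
      intro h
      apply hx
      have := congrArg (fun p => Polynomial.coeff p Q.natDegree) h
      simpa [hQx_def, coeff_map] using this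
    have hsub : (Finset.univ.filter (fun y : F => Polynomial.eval₂ (evalRingHom x) y Q = 0))
        ⊆ Qx.roots.toFinset := by
      intro y hy
      simp only [Finset.mem_filter, Finset.mem_univ, true_and] at hy
      rw [Multiset.mem_toFinset, mem_roots hQx, IsRoot.def, eval_map]
      exact hy
    calc _ ≤ Qx.roots.toFinset.card := Finset.card_le_card hsub
      _ ≤ Multiset.card Qx.roots := Multiset.toFinset_card_le _
      _ ≤ Qx.natDegree := card_roots' _
      _ ≤ Q.natDegree := natDegree_map_le
  have hsplit : (Finset.univ.filter (fun p : F × F =>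
        Polynomial.eval₂ (Polynomial.evalRingHom p.1) p.2 Q = 0)).card
      = ∑ x : F, (Finset.univ.filter (fun y : F =>
          Polynomial.eval₂ (evalRingHom x) y Q = 0)).card := by
    rw [Finset.card_filter, Fintype.sum_prod_type]
    simp only [Finset.card_filter]
  rw [hsplit]
  have hb : ∀ x : F,
      (Finset.univ.filter (fun y : F => Polynomial.eval₂ (evalRingHom x) y Q = 0)).card
        ≤ if c.eval x = 0 then Fintype.card F else Q.natDegree := by
    intro x
    by_cases h : c.eval x = 0
    · simp only [h, if_true]
      exact (Finset.card_filter_le _ _).trans (by simp)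
    · simp only [h, if_false]
      exact key x h
  calc ∑ x : F, (Finset.univ.filter (fun y : F =>
          Polynomial.eval₂ (evalRingHom x) y Q = 0)).card
      ≤ ∑ x : F, (if c.eval x = 0 then Fintype.card F else Q.natDegree) :=
        Finset.sum_le_sum fun x _ => hb x
    _ = (Finset.univ.filter (fun x : F => c.eval x = 0)).card * Fintype.card F
        + (Finset.univ.filter (fun x : F => ¬ c.eval x = 0)).card * Q.natDegree := by
        rw [Finset.sum_ite]
        simp [mul_comm]
    _ ≤ c.natDegree * Fintype.card F + Fintype.card F * Q.natDegree := by
        gcongr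
        · calc (Finset.univ.filter (fun x : F => c.eval x = 0)).card
              ≤ c.roots.toFinset.card := Finset.card_le_card (by
                intro x hx
                simp only [Finset.mem_filter, Finset.mem_univ, true_and] at hx
                rw [Multiset.mem_toFinset, mem_roots hc]
                exact hx)
            _ ≤ Multiset.card c.roots := Multiset.toFinset_card_le _
            _ ≤ c.natDegree := card_roots' _
        · exact (Finset.card_filter_le _ _).trans (by simp)
    _ = (c.natDegree + Q.natDegree) * Fintype.card F := by ring





/-- MRDP soundness: if `rank Δ > r`, then for any univariate polynomials
`f_k` (degree `< d`) and `g_k` (degree `< d'`), a uniform `(x,y) ∈ F_q²` satisfies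
`P_Δ(x,y) = Σ_k f_k(x)·g_k(y)` with probability at most `(d + d' - 2)/q`. -/
theorem stmt_9 (F : Type*) [Field F] [Fintype F] [DecidableEq F]
    (d d' r : ℕ) (Δ : Matrix (Fin d) (Fin d') F) (hr : r < Δ.rank)
    (f g : Fin r → Polynomial F)
    (hf : ∀ k, (f k).degree < d) (hg : ∀ k, (g k).degree < d') :
    ((Finset.univ.filter
        (fun p : F × F =>
          ∑ i : Fin d, ∑ j : Fin d', Δ i j * p.1 ^ (i : ℕ) * p.2 ^ (j : ℕ)
            = ∑ k : Fin r, (f k).eval p.1 * (g k).eval p.2)).card : ℝ)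
      / (Fintype.card (F × F) : ℝ)
      ≤ ((d + d' - 2 : ℕ) : ℝ) / (Fintype.card F : ℝ) := by
  classical
  have hd : 0 < d := lt_of_lt_of_le (Nat.zero_lt_succ _ |>.trans_le (Nat.succ_le_of_lt
    ((Nat.zero_le r).trans_lt hr))) Δ.rank_le_height
  have hd' : 0 < d' := lt_of_lt_of_le (Nat.zero_lt_succ _ |>.trans_le (Nat.succ_le_of_lt
    ((Nat.zero_le r).trans_lt hr))) Δ.rank_le_width
  -- the bivariate polynomial
  set A : Polynomial (Polynomial F) :=
    ∑ i : Fin d, ∑ j : Fin d', C (C (Δ i j) * X ^ (i : ℕ)) * X ^ (j : ℕ) with hA_def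
  set B : Polynomial (Polynomial F) :=
    ∑ k : Fin r, C (f k) * (g k).map C with hB_def
  set Q : Polynomial (Polynomial F) := A - B with hQ_def
  -- Q is nonzero
  have hQ : Q ≠ 0 := by
    intro h0
    have hAB : A = B := sub_eq_zero.mp h0
    have hco : ∀ (i : Fin d) (j : Fin d'),
        Δ i j = ∑ k : Fin r, (f k).coeff i * (g k).coeff j := by
      intro i j
      have h1 := congrArg (fun P => (Polynomial.coeff P (j : ℕ)).coeff (i : ℕ)) hAB
      simp only [hA_def, hB_def, finset_sum_coeff, coeff_C_mul_X_pow, coeff_C_mul,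
        coeff_map, coeff_mul_C] at h1
      simp only [coeff_X_pow, mul_ite, mul_one, mul_zero,
        apply_ite (fun p : Polynomial F => p.coeff (i : ℕ)), coeff_zero,
        coeff_C_mul_X_pow, Fin.val_inj] at h1
      simpa [Finset.sum_ite_eq, Finset.sum_ite_eq', Fin.val_inj] using h1
    let U : Matrix (Fin d) (Fin r) F := Matrix.of fun i k => (f k).coeff (i : ℕ)
    let V : Matrix (Fin r) (Fin d') F := Matrix.of fun k j => (g k).coeff (j : ℕ)
    have hfac : Δ = U * V := by
      ext i j
      rw [Matrix.mul_apply]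
      exact hco i j
    have : Δ.rank ≤ r := by
      rw [hfac]
      exact (Matrix.rank_mul_le_right _ _).trans
        ((Matrix.rank_le_card_height _).trans_eq (Fintype.card_fin r))
    omega
  -- degree in Y
  have hdegY : Q.degree < (d' : WithBot ℕ) := by
    have hbot : (⊥ : WithBot ℕ) < (d' : ℕ) := WithBot.bot_lt_coe _
    have hA : A.degree < (d' : WithBot ℕ) := by
      refine lt_of_le_of_lt (degree_sum_le _ _) ((Finset.sup_lt_iff hbot).mpr ?_)
      intro i _
      refine lt_of_le_of_lt (degree_sum_le _ _) ((Finset.sup_lt_iff hbot).mpr ?_)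
      intro j _
      exact lt_of_le_of_lt (degree_C_mul_X_pow_le _ _) (by exact_mod_cast j.2)
    have hB : B.degree < (d' : WithBot ℕ) := by
      refine lt_of_le_of_lt (degree_sum_le _ _) ((Finset.sup_lt_iff hbot).mpr ?_)
      intro k _
      calc (C (f k) * (g k).map C).degree ≤ (C (f k)).degree + ((g k).map C).degree :=
            degree_mul_le _ _
        _ ≤ 0 + (g k).degree := add_le_add degree_C_le (degree_map_le)
        _ = (g k).degree := zero_add _
        _ < (d' : WithBot ℕ) := hg k
    exact lt_of_le_of_lt (degree_sub_le _ _) (max_lt hA hB)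
  have hn : Q.natDegree < d' := (natDegree_lt_iff_degree_lt hQ).mpr hdegY
  -- coefficients have degree < d
  have hcoeffdeg : ∀ j₀ : ℕ, (Q.coeff j₀).degree < (d : WithBot ℕ) := by
    intro j₀
    have hbot : (⊥ : WithBot ℕ) < (d : ℕ) := WithBot.bot_lt_coe _
    have hA : (A.coeff j₀).degree < (d : WithBot ℕ) := by
      rw [hA_def]
      simp only [finset_sum_coeff, coeff_C_mul_X_pow]
      refine lt_of_le_of_lt (degree_sum_le _ _) ((Finset.sup_lt_iff hbot).mpr ?_)
      intro i _
      refine lt_of_le_of_lt (degree_sum_le _ _) ((Finset.sup_lt_iff hbot).mpr ?_)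
      intro j _
      split_ifs
      · exact lt_of_le_of_lt (degree_C_mul_X_pow_le _ _) (by exact_mod_cast i.2)
      · simpa using hbot
    have hB : (B.coeff j₀).degree < (d : WithBot ℕ) := by
      rw [hB_def]
      simp only [finset_sum_coeff, coeff_C_mul, coeff_map]
      refine lt_of_le_of_lt (degree_sum_le _ _) ((Finset.sup_lt_iff hbot).mpr ?_)
      intro k _
      calc (f k * C ((g k).coeff j₀)).degree ≤ (f k).degree + (C ((g k).coeff j₀)).degree :=
            degree_mul_le _ _
        _ ≤ (f k).degree + 0 := add_le_add le_rfl degree_C_le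
        _ = (f k).degree := add_zero _
        _ < (d : WithBot ℕ) := hf k
    rw [hQ_def, coeff_sub]
    exact lt_of_le_of_lt (degree_sub_le _ _) (max_lt hA hB)
  have hcne : Q.leadingCoeff ≠ 0 := leadingCoeff_ne_zero.mpr hQ
  have hm : Q.leadingCoeff.natDegree < d :=
    (natDegree_lt_iff_degree_lt hcne).mpr (hcoeffdeg Q.natDegree)
  -- evaluation identity
  have heval : ∀ p : F × F, Polynomial.eval₂ (evalRingHom p.1) p.2 Q
      = (∑ i : Fin d, ∑ j : Fin d', Δ i j * p.1 ^ (i : ℕ) * p.2 ^ (j : ℕ))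
        - ∑ k : Fin r, (f k).eval p.1 * (g k).eval p.2 := by
    rintro ⟨x, y⟩
    have hmap : ∀ k : Fin r, Polynomial.eval₂ (evalRingHom x) y ((g k).map C)
        = (g k).eval y := by
      intro k
      rw [eval₂_map]
      have : (evalRingHom x).comp (C : F →+* Polynomial F) = RingHom.id F := by
        ext a; simp
      rw [this]
      rfl
    simp only [hQ_def, hA_def, hB_def, eval₂_sub, eval₂_finset_sum, eval₂_mul, eval₂_C,
      eval₂_X_pow, hmap, eval_mul, eval_C, eval_pow, eval_X, coe_evalRingHom]
  -- rewrite the filter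
  have hfilter : (Finset.univ.filter
      (fun p : F × F =>
        ∑ i : Fin d, ∑ j : Fin d', Δ i j * p.1 ^ (i : ℕ) * p.2 ^ (j : ℕ)
          = ∑ k : Fin r, (f k).eval p.1 * (g k).eval p.2))
      = (Finset.univ.filter (fun p : F × F =>
          Polynomial.eval₂ (evalRingHom p.1) p.2 Q = 0)) := by
    apply Finset.filter_congr
    intro p _
    rw [heval p, sub_eq_zero]
  rw [hfilter]
  have hcount := count_aux F Q hQ
  have hmn : Q.leadingCoeff.natDegree + Q.natDegree ≤ d + d' - 2 := by omega
  have hq : (0:ℝ) < (Fintype.card F : ℝ) := by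
    exact_mod_cast Fintype.card_pos
  have hcard : ((Finset.univ.filter (fun p : F × F =>
      Polynomial.eval₂ (evalRingHom p.1) p.2 Q = 0)).card : ℝ)
      ≤ ((d + d' - 2 : ℕ) : ℝ) * (Fintype.card F : ℝ) := by
    exact_mod_cast hcount.trans (Nat.mul_le_mul_right _ hmn)
  rw [Fintype.card_prod, Nat.cast_mul]
  rw [div_le_div_iff₀ (by positivity) hq]
  nlinarith [hcard, hq, Finset.card_filter_le Finset.univ (fun p : F × F =>
      Polynomial.eval₂ (evalRingHom p.1) p.2 Q = 0)]
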